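/- Let $0 < a < b$. Define $\mathscr{A} = \frac{a+b}{2}$ and $\mathscr{L} = \frac{b-a}{\ln b - \ln a}$. Then $0 \le \mathscr{A} - \mathscr{L} \le \frac{\mathscr{A}\,\mathscr{L}\,(b-a)}{4 a^2}$. -/

import Mathlib

theorem arith_sub_log_mean_bound (a b : ℝ) (ha : 0 < a) (hab : a < b) :
    0 ≤ (a + b) / 2 - (b - a) / (Real.log b - Real.log a) ∧
    (a + b) / 2 - (b - a) / (Real.log b - Real.log a) ≤
      ((a + b) / 2) * ((b - a) / (Real.log b - Real.log a)) * (b - a) / (4 * a ^ 2) := by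
  set A : ℝ := (a + b) / 2 with hA
  have hb : 0 < b := ha.trans hab
  have hApos : 0 < A := by positivity
  have hab' : a ≤ b := hab.le
  have hIcc : Set.uIcc a b = Set.Icc a b := Set.uIcc_of_le hab'
  have hlog : ∫ t in a..b, t⁻¹ = Real.log b - Real.log a := by
    rw [integral_inv (by rw [hIcc]; intro h; exact absurd h.1 (not_le.mpr ha)),
      Real.log_div hb.ne' ha.ne']
  have hint_inv : IntervalIntegrable (fun t : ℝ => t⁻¹) MeasureTheory.volume a b := by
    apply ContinuousOn.intervalIntegrable
    apply ContinuousOn.inv₀ continuousOn_id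
    intro x hx; rw [hIcc] at hx; exact (ha.trans_le hx.1).ne'
  have hint_low : IntervalIntegrable (fun t : ℝ => 2 / A - t / A ^ 2)
      MeasureTheory.volume a b := by
    apply Continuous.intervalIntegrable; fun_prop
  have hint_up : IntervalIntegrable
      (fun t : ℝ => 2 / A - t / A ^ 2 + (t - A) ^ 2 / (a * A ^ 2))
      MeasureTheory.volume a b := by
    apply Continuous.intervalIntegrable; fun_prop
  have hI_low : ∫ t in a..b, (2 / A - t / A ^ 2) = (b - a) / A := by
    rw [intervalIntegral.integral_sub (by apply Continuous.intervalIntegrable; fun_prop)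
      (by apply Continuous.intervalIntegrable; fun_prop)]
    simp only [intervalIntegral.integral_div, intervalIntegral.integral_const, integral_id,
      smul_eq_mul]
    rw [hA]; field_simp; ring
  have hI_sq : ∫ t in a..b, (t - A) ^ 2 = (b - a) ^ 3 / 12 := by
    have h := intervalIntegral.integral_comp_sub_right (a := a) (b := b)
      (fun x : ℝ => x ^ 2) A
    rw [h, integral_pow]
    push_cast
    rw [hA]; ring
  have hI_up : ∫ t in a..b, (2 / A - t / A ^ 2 + (t - A) ^ 2 / (a * A ^ 2))
      = (b - a) / A + (b - a) ^ 3 / (12 * (a * A ^ 2)) := by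
    rw [intervalIntegral.integral_add hint_low
      (by apply Continuous.intervalIntegrable; fun_prop), hI_low,
      intervalIntegral.integral_div, hI_sq, div_div]
  have hlow : (b - a) / A ≤ Real.log b - Real.log a := by
    rw [← hlog, ← hI_low]
    apply intervalIntegral.integral_mono_on hab' hint_low hint_inv
    intro t ht
    have hta : a ≤ t := ht.1
    have htpos : 0 < t := lt_of_lt_of_le ha hta
    have key : t⁻¹ - (2 / A - t / A ^ 2) = (t - A) ^ 2 / (t * A ^ 2) := by
      field_simp; ring
    nlinarith [div_nonneg (sq_nonneg (t - A)) (le_of_lt (by positivity : (0:ℝ) < t * A ^ 2))]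
  have hup : Real.log b - Real.log a ≤ (b - a) / A + (b - a) ^ 3 / (12 * (a * A ^ 2)) := by
    rw [← hlog, ← hI_up]
    apply intervalIntegral.integral_mono_on hab' hint_inv hint_up
    intro t ht
    have hta : a ≤ t := ht.1
    have htpos : 0 < t := lt_of_lt_of_le ha hta
    have e1 : t⁻¹ - (2 / A - t / A ^ 2) = (t - A) ^ 2 / (t * A ^ 2) := by
      field_simp; ring
    have e2 : (t - A) ^ 2 / (a * A ^ 2) - (t - A) ^ 2 / (t * A ^ 2)
        = (t - A) ^ 2 * (t - a) / (a * t * A ^ 2) := by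
      field_simp
    have e3 : (0:ℝ) ≤ (t - A) ^ 2 * (t - a) / (a * t * A ^ 2) := by
      apply div_nonneg (mul_nonneg (sq_nonneg _) (by linarith)) (by positivity)
    nlinarith
  set D : ℝ := Real.log b - Real.log a with hD
  have hDpos : 0 < D := by
    have h0 : (0:ℝ) < (b - a) / A := div_pos (by linarith) hApos
    linarith
  have hAD : b - a ≤ A * D := by
    have := (div_le_iff₀ hApos).mp hlow
    linarith [this]
  constructor
  · rw [sub_nonneg, div_le_iff₀ hDpos]
    linarith
  · have key : A * D - (b - a) ≤ A * (b - a) ^ 2 / (4 * a ^ 2) := by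
      have h1 : A * D ≤ (b - a) + (b - a) ^ 3 / (12 * (a * A)) := by
        have h := mul_le_mul_of_nonneg_left hup hApos.le
        have e : A * ((b - a) / A + (b - a) ^ 3 / (12 * (a * A ^ 2)))
            = (b - a) + (b - a) ^ 3 / (12 * (a * A)) := by
          field_simp
        linarith [e ▸ h]
      have h2 : (b - a) ^ 3 / (12 * (a * A)) ≤ A * (b - a) ^ 2 / (4 * a ^ 2) := by
        rw [div_le_div_iff₀ (by positivity) (by positivity), hA]
        nlinarith [mul_nonneg (mul_nonneg ha.le (sq_nonneg (b - a)))
          (show (0:ℝ) ≤ 7 * a ^ 2 + 2 * a * b + 3 * b ^ 2 by positivity)]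
      linarith
    calc A - (b - a) / D = (A * D - (b - a)) / D := by field_simp
      _ ≤ (A * (b - a) ^ 2 / (4 * a ^ 2)) / D := by gcongr
      _ = A * ((b - a) / D) * (b - a) / (4 * a ^ 2) := by field_simp
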